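/- The six points p, p1, p2, p3, p4, p5 do not lie on a conic: the only homogeneous polynomial of degree 2 in ℂ[x,y,z] vanishing at coordinate representatives of all six points p, p1, p2, p3, p4, p5 is the zero polynomial. -/
import Mathlib


noncomputable section

open MvPolynomial

/-- `α = √17`. -/
def α : ℂ := Real.sqrt 17
/-- `β = √(21 + 5√17)`. -/
def β : ℂ := Real.sqrt (21 + 5 * Real.sqrt 17)
/-- `δ = √(5 + √17)`. -/
def δ : ℂ := Real.sqrt (5 + Real.sqrt 17)

/-- Coordinate representative of `p = [1:0:0]`. -/
def ptP : Fin 3 → ℂ := ![1, 0, 0]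
/-- Coordinate representative of `p1 = [0:1:0]`. -/
def ptP1 : Fin 3 → ℂ := ![0, 1, 0]
/-- Coordinate representative of `p2 = [10+4α+4β : 3δ : 6]`. -/
def ptP2 : Fin 3 → ℂ := ![10+4*α+4*β, 3*δ, 6]
/-- Coordinate representative of `p3 = [1:0:1]`. -/
def ptP3 : Fin 3 → ℂ := ![1, 0, 1]
/-- Coordinate representative of `p4 = [16+4α+4β : 3δ+6 : 12]`. -/
def ptP4 : Fin 3 → ℂ := ![16+4*α+4*β, 3*δ+6, 12]
/-- Coordinate representative of `p5 = [16+4α+4β : 3δ−6 : 12]`. -/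
def ptP5 : Fin 3 → ℂ := ![16+4*α+4*β, 3*δ-6, 12]


private lemma classify2 (d : Fin 3 →₀ ℕ) (hd : d 0 + d 1 + d 2 = 2) :
    d = Finsupp.single 0 2 ∨ d = Finsupp.single 1 2 ∨ d = Finsupp.single 2 2 ∨
    d = Finsupp.single 0 1 + Finsupp.single 1 1 ∨
    d = Finsupp.single 0 1 + Finsupp.single 2 1 ∨
    d = Finsupp.single 1 1 + Finsupp.single 2 1 := by
  have key : ∀ m : Fin 3 →₀ ℕ, d 0 = m 0 → d 1 = m 1 → d 2 = m 2 → d = m := by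
    intro m h0 h1 h2
    ext i; fin_cases i <;> assumption
  have hb0 : d 0 ≤ 2 := by omega
  have hb1 : d 1 ≤ 2 := by omega
  interval_cases h0 : d 0 <;> interval_cases h1 : d 1 <;>
  · first
    | (left; apply key <;> simp <;> omega)
    | (right; left; apply key <;> simp <;> omega)
    | (right; right; left; apply key <;> simp <;> omega)
    | (right; right; right; left; apply key <;> simp [Finsupp.single_apply] <;> omega)
    | (right; right; right; right; left; apply key <;> simp [Finsupp.single_apply] <;> omega)
    | (right; right; right; right; right; apply key <;> simp [Finsupp.single_apply] <;> omega)

private lemma decomp2 (G : MvPolynomial (Fin 3) ℂ) (hG : G.IsHomogeneous 2) :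
    G = monomial (Finsupp.single 0 2) (coeff (Finsupp.single 0 2) G)
      + monomial (Finsupp.single 1 2) (coeff (Finsupp.single 1 2) G)
      + monomial (Finsupp.single 2 2) (coeff (Finsupp.single 2 2) G)
      + monomial (Finsupp.single 0 1 + Finsupp.single 1 1)
          (coeff (Finsupp.single 0 1 + Finsupp.single 1 1) G)
      + monomial (Finsupp.single 0 1 + Finsupp.single 2 1)
          (coeff (Finsupp.single 0 1 + Finsupp.single 2 1) G)
      + monomial (Finsupp.single 1 1 + Finsupp.single 2 1)
          (coeff (Finsupp.single 1 1 + Finsupp.single 2 1) G) := by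
  have hcl : ∀ d, coeff d G ≠ 0 →
      d = Finsupp.single 0 2 ∨ d = Finsupp.single 1 2 ∨ d = Finsupp.single 2 2 ∨
      d = Finsupp.single 0 1 + Finsupp.single 1 1 ∨
      d = Finsupp.single 0 1 + Finsupp.single 2 1 ∨
      d = Finsupp.single 1 1 + Finsupp.single 2 1 := by
    intro d hd
    apply classify2
    have := hG hd
    rw [Finsupp.weight_apply, Finsupp.sum_fintype _ _ (by simp)] at this
    simpa [Fin.sum_univ_three] using this
  ext d
  simp only [coeff_add, coeff_monomial]
  by_cases e0 : Finsupp.single (0:Fin 3) 2 = d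
  · subst e0; simp +decide [Finsupp.ext_iff, Fin.forall_fin_succ, Finsupp.single_apply]
  by_cases e1 : Finsupp.single (1:Fin 3) 2 = d
  · subst e1; simp +decide [Finsupp.ext_iff, Fin.forall_fin_succ, Finsupp.single_apply]
  by_cases e2 : Finsupp.single (2:Fin 3) 2 = d
  · subst e2; simp +decide [Finsupp.ext_iff, Fin.forall_fin_succ, Finsupp.single_apply]
  by_cases e3 : Finsupp.single (0:Fin 3) 1 + Finsupp.single 1 1 = d
  · subst e3; simp +decide [Finsupp.ext_iff, Fin.forall_fin_succ, Finsupp.single_apply]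
  by_cases e4 : Finsupp.single (0:Fin 3) 1 + Finsupp.single 2 1 = d
  · subst e4; simp +decide [Finsupp.ext_iff, Fin.forall_fin_succ, Finsupp.single_apply]
  by_cases e5 : Finsupp.single (1:Fin 3) 1 + Finsupp.single 2 1 = d
  · subst e5; simp +decide [Finsupp.ext_iff, Fin.forall_fin_succ, Finsupp.single_apply]
  simp only [e0, e1, e2, e3, e4, e5, if_false]
  norm_num
  by_contra hd
  rcases hcl d hd with h'|h'|h'|h'|h'|h' <;> simp_all

/-- the six points `p, p1, …, p5` do not lie on a conic: the only
homogeneous polynomial of degree 2 vanishing at all six is the zero polynomial. -/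
theorem six_points_not_on_a_conic (G : MvPolynomial (Fin 3) ℂ)
    (hG : G.IsHomogeneous 2)
    (h : eval ptP G = 0) (h1 : eval ptP1 G = 0) (h2 : eval ptP2 G = 0)
    (h3 : eval ptP3 G = 0) (h4 : eval ptP4 G = 0) (h5 : eval ptP5 G = 0) :
    G = 0 := by

  have hα : α^2 = 17 := by
    rw [α, ← Complex.ofReal_pow, Real.sq_sqrt (by norm_num)]; norm_num
  have hsq17 : (0:ℝ) ≤ Real.sqrt 17 := Real.sqrt_nonneg _
  have hβ : β^2 = 21 + 5*α := by
    rw [β, α, ← Complex.ofReal_pow, Real.sq_sqrt (by positivity)]; push_cast; ring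
  have hδ : δ^2 = 5 + α := by
    rw [δ, α, ← Complex.ofReal_pow, Real.sq_sqrt (by positivity)]; push_cast; ring
  have hdec := decomp2 G hG
  set c0 := coeff (Finsupp.single 0 2) G with hd0
  set c1 := coeff (Finsupp.single 1 2) G with hd1
  set c2 := coeff (Finsupp.single 2 2) G with hd2
  set c3 := coeff (Finsupp.single 0 1 + Finsupp.single 1 1) G with hd3
  set c4 := coeff (Finsupp.single 0 1 + Finsupp.single 2 1) G with hd4
  set c5 := coeff (Finsupp.single 1 1 + Finsupp.single 2 1) G with hd5
  have key : ∀ v : Fin 3 → ℂ, eval v G =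
      c0*(v 0)^2 + c1*(v 1)^2 + c2*(v 2)^2 + c3*(v 0 * v 1) + c4*(v 0 * v 2)
        + c5*(v 1 * v 2) := by
    intro v
    rw [hdec]
    simp [eval_monomial, Finsupp.prod_add_index, Finsupp.prod_single_index, pow_add]
    try ring
  have H0 : c0*(1:ℂ)^2 + c1*0^2 + c2*0^2 + c3*(1*0) + c4*(1*0) + c5*(0*0) = 0 := by
    have t := (key ptP).symm.trans h
    simp only [ptP, Matrix.cons_val_zero, Matrix.cons_val_one, Matrix.head_cons,
      Matrix.cons_val_two, Matrix.tail_cons] at t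
    linear_combination t
  have H1 : c0*(0:ℂ)^2 + c1*1^2 + c2*0^2 + c3*(0*1) + c4*(0*0) + c5*(1*0) = 0 := by
    have t := (key ptP1).symm.trans h1
    simp only [ptP1, Matrix.cons_val_zero, Matrix.cons_val_one, Matrix.head_cons,
      Matrix.cons_val_two, Matrix.tail_cons] at t
    linear_combination t
  have H2 : c0*(10+4*α+4*β)^2 + c1*(3*δ)^2 + c2*(6:ℂ)^2 + c3*((10+4*α+4*β)*(3*δ))
      + c4*((10+4*α+4*β)*6) + c5*((3*δ)*6) = 0 := by
    have t := (key ptP2).symm.trans h2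
    simp only [ptP2, Matrix.cons_val_zero, Matrix.cons_val_one, Matrix.head_cons,
      Matrix.cons_val_two, Matrix.tail_cons] at t
    linear_combination t
  have H3 : c0*(1:ℂ)^2 + c1*0^2 + c2*1^2 + c3*(1*0) + c4*(1*1) + c5*(0*1) = 0 := by
    have t := (key ptP3).symm.trans h3
    simp only [ptP3, Matrix.cons_val_zero, Matrix.cons_val_one, Matrix.head_cons,
      Matrix.cons_val_two, Matrix.tail_cons] at t
    linear_combination t
  have H4 : c0*(16+4*α+4*β)^2 + c1*(3*δ+6)^2 + c2*(12:ℂ)^2 + c3*((16+4*α+4*β)*(3*δ+6))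
      + c4*((16+4*α+4*β)*12) + c5*((3*δ+6)*12) = 0 := by
    have t := (key ptP4).symm.trans h4
    simp only [ptP4, Matrix.cons_val_zero, Matrix.cons_val_one, Matrix.head_cons,
      Matrix.cons_val_two, Matrix.tail_cons] at t
    linear_combination t
  have H5 : c0*(16+4*α+4*β)^2 + c1*(3*δ-6)^2 + c2*(12:ℂ)^2 + c3*((16+4*α+4*β)*(3*δ-6))
      + c4*((16+4*α+4*β)*12) + c5*((3*δ-6)*12) = 0 := by
    have t := (key ptP5).symm.trans h5
    simp only [ptP5, Matrix.cons_val_zero, Matrix.cons_val_one, Matrix.head_cons,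
      Matrix.cons_val_two, Matrix.tail_cons] at t
    linear_combination t
  have hc0 : c0 = 0 := by
    linear_combination ((1 : ℂ)) * H0

  have hc1 : c1 = 0 := by
    linear_combination ((1 : ℂ)) * H1

  have hc2 : c2 = 0 := by
    linear_combination ((4/3 : ℂ) + (1/3 : ℂ)*β + (1/3 : ℂ)*α) * H0 + ((1/16 : ℂ) + (-1/16 : ℂ)*β + (1/16 : ℂ)*α) * H1 + ((-1/16 : ℂ)*β + (1/16 : ℂ)*α*β) * H3 + ((1/288 : ℂ) + (-1/576 : ℂ)*δ + (1/4608 : ℂ)*β + (-1/9216 : ℂ)*β*δ + (-1/4608 : ℂ)*α*β + (1/9216 : ℂ)*α*β*δ) * H4 + ((1/288 : ℂ) + (1/576 : ℂ)*δ + (1/4608 : ℂ)*β + (1/9216 : ℂ)*β*δ + (-1/4608 : ℂ)*α*β + (-1/9216 : ℂ)*α*β*δ) * H5 + (((7/18 : ℂ) + (1/12 : ℂ)*β + (5/72 : ℂ)*α + (1/144 : ℂ)*α*β)*c0 + ((-1/256 : ℂ)*β)*c1 + ((5/48 : ℂ) + (1/48 : ℂ)*β)*c4) * hα + (((-1/6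 : ℂ) + (-1/144 : ℂ)*β + (1/24 : ℂ)*α + (1/144 : ℂ)*α*β + (1/72 : ℂ)*α*α)*c0 + ((-1/48 : ℂ) + (1/48 : ℂ)*α)*c4) * hβ + (((1/16 : ℂ) + (1/256 : ℂ)*β + (-1/256 : ℂ)*α*β)*c1) * hδ

  have hc3 : c3 = 0 := by
    linear_combination ((2 : ℂ)*δ + (-5/6 : ℂ)*β*δ + (-2/3 : ℂ)*α*δ + (1/6 : ℂ)*α*β*δ) * H0 + ((-3/8 : ℂ)*δ + (-5/32 : ℂ)*β*δ + (1/8 : ℂ)*α*δ + (1/32 : ℂ)*α*β*δ) * H1 + ((-5/144 : ℂ)*δ + (-11/1152 : ℂ)*β*δ + (1/144 : ℂ)*α*δ + (1/384 : ℂ)*α*β*δ) * H2 + ((-5/4 : ℂ)*δ + (-11/32 : ℂ)*β*δ + (1/4 : ℂ)*α*δ + (3/32 : ℂ)*α*β*δ) * H3 + ((5/576 : ℂ)*δ + (11/4608 : ℂ)*β*δ + (-1/576 : ℂ)*α*δ + (-1/1536 : ℂ)*α*β*δ) * H4 + ((5/576 : ℂ)*δ + (11/4608 : ℂ)*β*δ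 + (-1/576 : ℂ)*α*δ + (-1/1536 : ℂ)*α*β*δ) * H5 + (((-31/72 : ℂ)*δ + (-13/72 : ℂ)*β*δ + (-19/72 : ℂ)*α*δ + (-1/48 : ℂ)*α*β*δ)*c0 + ((-1/32 : ℂ)*δ + (-3/256 : ℂ)*β*δ)*c1 + ((-91/192 : ℂ) + (-5/64 : ℂ)*β + (-23/192 : ℂ)*α + (-1/64 : ℂ)*α*β)*c3) * hα + (((31/72 : ℂ)*δ + (11/144 : ℂ)*β*δ + (1/18 : ℂ)*α*δ + (-1/48 : ℂ)*α*β*δ + (-1/24 : ℂ)*α*α*δ)*c0 + ((55/192 : ℂ) + (-1/48 : ℂ)*α + (-1/64 : ℂ)*α*α)*c3) * hβ + (((5/32 : ℂ)*δ + (11/256 : ℂ)*β*δ + (-1/32 : ℂ)*α*δ + (-3/256 : ℂ)*α*β*δ)*c1 + ((5/24 : ℂ) + (17/64 : ℂ)*β + (11/192 : ℂ)*β*β + (1/6 : ℂ)*α + (-1/64 : ℂ)*α*β*β + (-1/24 : ℂ)*α*α + (-1/64 : ℂ)*α*α*β)*c3) * hδ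

  have hc4 : c4 = 0 := by
    linear_combination ((-7/3 : ℂ) + (-1/3 : ℂ)*β + (-1/3 : ℂ)*α) * H0 + ((-1/16 : ℂ) + (1/16 : ℂ)*β + (-1/16 : ℂ)*α) * H1 + ((1 : ℂ) + (1/16 : ℂ)*β + (-1/16 : ℂ)*α*β) * H3 + ((-1/288 : ℂ) + (1/576 : ℂ)*δ + (-1/4608 : ℂ)*β + (1/9216 : ℂ)*β*δ + (1/4608 : ℂ)*α*β + (-1/9216 : ℂ)*α*β*δ) * H4 + ((-1/288 : ℂ) + (-1/576 : ℂ)*δ + (-1/4608 : ℂ)*β + (-1/9216 : ℂ)*β*δ + (1/4608 : ℂ)*α*β + (1/9216 : ℂ)*α*β*δ) * H5 + (((-7/18 : ℂ) + (-1/12 : ℂ)*β + (-5/72 : ℂ)*α + (-1/144 : ℂ)*α*β)*c0 + ((1/256 : ℂ)*β)*c1 + ((-5/48 : ℂ) + (-1/48 : ℂ)*β)*c4) * hα + (((1/6 : ℂ) + (1/144 : ℂ)*β + (-1/24 : ℂ)*α + (-1/144 : ℂ)*α*β + (-1/72 : ℂ)*α*α)*c0 + ((1/48 : ℂ) + (-1/48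 : ℂ)*α)*c4) * hβ + (((-1/16 : ℂ) + (-1/256 : ℂ)*β + (1/256 : ℂ)*α*β)*c1) * hδ

  have hc5 : c5 = 0 := by
    linear_combination ((20/9 : ℂ)*δ + (-1/2 : ℂ)*β*δ + (4/9 : ℂ)*α*δ + (5/18 : ℂ)*α*β*δ) * H0 + ((-1/2 : ℂ)*δ + (5/32 : ℂ)*β*δ + (-1/32 : ℂ)*α*β*δ) * H1 + ((11/1152 : ℂ)*β*δ + (-1/384 : ℂ)*α*β*δ) * H2 + ((11/32 : ℂ)*β*δ + (-3/32 : ℂ)*α*β*δ) * H3 + ((1/144 : ℂ) + (-11/4608 : ℂ)*β*δ + (1/1536 : ℂ)*α*β*δ) * H4 + ((-1/144 : ℂ) + (-11/4608 : ℂ)*β*δ + (1/1536 : ℂ)*α*β*δ) * H5 + (((23/72 : ℂ)*δ + (5/72 : ℂ)*β*δ + (5/24 : ℂ)*α*δ + (1/48 : ℂ)*α*β*δ)*c0 + ((3/256 : ℂ)*β*δ)*c1 + ((83/192 : ℂ) + (7/192 : ℂ)*β + (5/64 : ℂ)*α + (1/64 : ℂ)*α*β)*c3) * hα + (((-11/72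 : ℂ)*δ + (-11/144 : ℂ)*β*δ + (-1/9 : ℂ)*α*δ + (1/48 : ℂ)*α*β*δ + (1/24 : ℂ)*α*α*δ)*c0 + ((-55/192 : ℂ) + (1/48 : ℂ)*α + (1/64 : ℂ)*α*α)*c3) * hβ + (((-11/256 : ℂ)*β*δ + (3/256 : ℂ)*α*β*δ)*c1 + ((-11/192 : ℂ)*β + (-11/192 : ℂ)*β*β + (-1/24 : ℂ)*α*β + (1/64 : ℂ)*α*β*β + (1/64 : ℂ)*α*α*β)*c3) * hδ

  rw [hdec, hc0, hc1, hc2, hc3, hc4, hc5]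
  simp
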